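/- With the notation above (κ_r, L_r(λ) = 1 - ψ(κ_r(λ,0))/λ, φ = ψ'∘ψ⁻¹): if -log L_r(λ) ≤ 1 then (2/λ) ψ(rλ/2) ≤ 1. -/

import Mathlib

open MeasureTheory Real Set

private lemma hfun_nonneg (u : ℝ) : 0 ≤ Real.exp (-u) - 1 + u := by
  have := Real.add_one_le_exp (-u); linarith

private lemma exp_neg_quad (u : ℝ) (hu : 0 ≤ u) : Real.exp (-u) ≤ 1 - u + u ^ 2 / 2 := by
  have hd : ∀ y : ℝ, HasDerivAt (fun y : ℝ => 1 - y + y ^ 2 / 2 - Real.exp (-y))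
      (-1 + y + Real.exp (-y)) y := by
    intro y
    have h1 : HasDerivAt (fun y : ℝ => Real.exp (-y)) (-Real.exp (-y)) y := by
      simpa [Function.comp_def] using (Real.hasDerivAt_exp (-y)).comp y ((hasDerivAt_id y).neg)
    have h2 : HasDerivAt (fun y : ℝ => 1 - y + y ^ 2 / 2) (-1 + y) y := by
      have : HasDerivAt (fun y : ℝ => y ^ 2) (2 * y) y := by
        simpa using hasDerivAt_pow 2 y
      have := ((hasDerivAt_const y (1:ℝ)).sub (hasDerivAt_id y)).add (this.div_const 2)
      exact this.congr_deriv (by ring)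
    exact (h2.sub h1).congr_deriv (by ring)
  have hmono : MonotoneOn (fun y : ℝ => 1 - y + y ^ 2 / 2 - Real.exp (-y)) (Ici 0) := by
    apply monotoneOn_of_deriv_nonneg (convex_Ici 0)
    · exact fun y _ => (hd y).continuousAt.continuousWithinAt
    · exact fun y _ => (hd y).differentiableAt.differentiableWithinAt
    · intro y _
      rw [(hd y).deriv]
      have := Real.add_one_le_exp (-y); linarith
  have := hmono (self_mem_Ici) (mem_Ici.2 hu) hu
  simp only [neg_zero, Real.exp_zero] at this
  nlinarith

private lemma half_le_one_sub_exp (u : ℝ) (hu0 : 0 ≤ u) (hu1 : u ≤ 1) :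
    u / 2 ≤ 1 - Real.exp (-u) := by
  have h := exp_neg_quad u hu0
  nlinarith

private lemma hfun_mono {u v : ℝ} (hu : 0 ≤ u) (huv : u ≤ v) :
    Real.exp (-u) - 1 + u ≤ Real.exp (-v) - 1 + v := by
  have hmono : MonotoneOn (fun y : ℝ => Real.exp (-y) + y) (Ici 0) := by
    apply monotoneOn_of_deriv_nonneg (convex_Ici 0)
    · fun_prop
    · intro y _
      exact (((Real.hasDerivAt_exp (-y)).comp y ((hasDerivAt_id y).neg)).add
        (hasDerivAt_id y)).differentiableAt.differentiableWithinAt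
    · intro y hy
      rw [interior_Ici] at hy
      have hdy : HasDerivAt (fun y : ℝ => Real.exp (-y) + y) (-Real.exp (-y) + 1) y := by
        simpa [Function.comp_def, Pi.add_def] using ((Real.hasDerivAt_exp (-y)).comp y ((hasDerivAt_id y).neg)).add
          (hasDerivAt_id y)
      rw [hdy.deriv]
      have : Real.exp (-y) ≤ 1 := Real.exp_le_one_iff.2 (by linarith [hy.out.le])
      linarith
  have := hmono (mem_Ici.2 hu) (mem_Ici.2 (hu.trans huv)) huv
  simp only at this; linarith

private lemma hfun_anti {u v : ℝ} (hv : v ≤ 0) (huv : u ≤ v) :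
    Real.exp (-v) - 1 + v ≤ Real.exp (-u) - 1 + u := by
  have hanti : AntitoneOn (fun y : ℝ => Real.exp (-y) + y) (Iic 0) := by
    apply antitoneOn_of_deriv_nonpos (convex_Iic 0)
    · fun_prop
    · intro y _
      exact (((Real.hasDerivAt_exp (-y)).comp y ((hasDerivAt_id y).neg)).add
        (hasDerivAt_id y)).differentiableAt.differentiableWithinAt
    · intro y hy
      rw [interior_Iic] at hy
      have hdy : HasDerivAt (fun y : ℝ => Real.exp (-y) + y) (-Real.exp (-y) + 1) y := by
        simpa [Function.comp_def, Pi.add_def] using ((Real.hasDerivAt_exp (-y)).comp y ((hasDerivAt_id y).neg)).add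
          (hasDerivAt_id y)
      rw [hdy.deriv]
      have : (1:ℝ) ≤ Real.exp (-y) := by
        rw [show (1:ℝ) = Real.exp 0 by simp]
        exact Real.exp_le_exp.2 (by linarith [hy.out.le])
      linarith
  have := hanti (mem_Iic.2 (huv.trans hv)) (mem_Iic.2 hv) huv
  simp only at this; linarith

private lemma g_mono (x : ℝ) {t₁ t₂ : ℝ} (ht₁ : 0 ≤ t₁) (ht : t₁ ≤ t₂) :
    Real.exp (-(t₁ * x)) - 1 + t₁ * x ≤ Real.exp (-(t₂ * x)) - 1 + t₂ * x := by
  rcases le_or_gt 0 x with hx | hx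
  · exact hfun_mono (mul_nonneg ht₁ hx) (mul_le_mul_of_nonneg_right ht hx)
  · exact hfun_anti (mul_nonpos_of_nonneg_of_nonpos ht₁ hx.le)
      (mul_le_mul_of_nonpos_right ht hx.le)

private lemma g_bound {t x : ℝ} (ht : 0 ≤ t) (hx : 0 < x) :
    Real.exp (-(t * x)) - 1 + t * x ≤ max t (t ^ 2) * min x (x ^ 2) := by
  rcases le_or_gt 1 x with hx1 | hx1
  · have hmin : min x (x ^ 2) = x := min_eq_left (by nlinarith)
    rw [hmin]
    have h1 : Real.exp (-(t * x)) ≤ 1 := Real.exp_le_one_iff.2 (by nlinarith)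
    have h2 : t * x ≤ max t (t ^ 2) * x :=
      mul_le_mul_of_nonneg_right (le_max_left _ _) hx.le
    linarith
  · have hmin : min x (x ^ 2) = x ^ 2 := min_eq_right (by nlinarith)
    rw [hmin]
    have h1 := exp_neg_quad (t * x) (mul_nonneg ht hx.le)
    have h2 : (t * x) ^ 2 / 2 ≤ t ^ 2 * x ^ 2 := by nlinarith [sq_nonneg (t * x)]
    have h3 : t ^ 2 * x ^ 2 ≤ max t (t ^ 2) * x ^ 2 :=
      mul_le_mul_of_nonneg_right (le_max_right _ _) (sq_nonneg x)
    nlinarith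


theorem claim1_small_L (α β : ℝ) (hα : 0 ≤ α) (hβ : 0 ≤ β)
    (ν : Measure ℝ) (hν0 : ν (Set.Iic 0) = 0)
    (hνint : Integrable (fun r => min r (r ^ 2)) ν)
    (ψ ψ' ψinv : ℝ → ℝ) (κ : ℝ → ℝ → ℝ)
    (hψ : ∀ l : ℝ, 0 ≤ l →
      ψ l = α * l + β * l ^ 2 + ∫ r, (Real.exp (-(l * r)) - 1 + l * r) ∂ν)
    (hext : IntegrableOn (fun u => 1 / ψ u) (Set.Ioi 1))
    (hderiv : ∀ l : ℝ, 0 < l → HasDerivAt ψ (ψ' l) l)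
    (hinvpos : ∀ l : ℝ, 0 < l → 0 < ψinv l)
    (hinv₁ : ∀ l : ℝ, 0 ≤ l → ψ (ψinv l) = l)
    (hinv₂ : ∀ l : ℝ, 0 ≤ l → ψinv (ψ l) = l)
    (hκ0 : ∀ l : ℝ, 0 < l → κ 0 l = 0)
    (hκ : ∀ l : ℝ, 0 < l → ∀ r : ℝ, 0 ≤ r →
      HasDerivAt (fun s => κ s l) (l - ψ (κ r l)) r) :
    ∀ r l : ℝ, 0 < r → 0 < l →
      -Real.log (1 - ψ (κ r l) / l) ≤ 1 →
      (2 / l) * ψ (r * l / 2) ≤ 1 := by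
  -- integrability of the integrand
  have hInt : ∀ t : ℝ, 0 ≤ t →
      Integrable (fun x => Real.exp (-(t * x)) - 1 + t * x) ν := by
    intro t ht
    have hpos : ∀ᵐ x ∂ν, 0 < x := by
      rw [ae_iff]
      convert hν0 using 2
      ext x; simp [not_lt]
    have hb : ∀ᵐ x ∂ν, ‖Real.exp (-(t * x)) - 1 + t * x‖ ≤
        max t (t ^ 2) * min x (x ^ 2) := by
      filter_upwards [hpos] with x hx
      rw [Real.norm_eq_abs, abs_of_nonneg (hfun_nonneg _)]
      exact g_bound ht hx
    exact Integrable.mono' (hνint.const_mul _)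
      (Continuous.aestronglyMeasurable (by fun_prop)) hb
  have ψ0 : ψ 0 = 0 := by rw [hψ 0 le_rfl]; simp
  have ψnn : ∀ u : ℝ, 0 ≤ u → 0 ≤ ψ u := by
    intro u hu
    rw [hψ u hu]
    have h1 : 0 ≤ ∫ x, (Real.exp (-(u * x)) - 1 + u * x) ∂ν :=
      integral_nonneg fun x => hfun_nonneg _
    have h2 : 0 ≤ α * u := mul_nonneg hα hu
    have h3 : 0 ≤ β * u ^ 2 := mul_nonneg hβ (sq_nonneg u)
    linarith
  have ψmono : MonotoneOn ψ (Ici 0) := by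
    intro u hu v hv huv
    rw [hψ u hu, hψ v hv]
    have hint : (∫ x, (Real.exp (-(u * x)) - 1 + u * x) ∂ν) ≤
        ∫ x, (Real.exp (-(v * x)) - 1 + v * x) ∂ν :=
      integral_mono (hInt u hu) (hInt v hv) fun x => g_mono x hu huv
    have h2 : α * u ≤ α * v := mul_le_mul_of_nonneg_left huv hα
    have h3 : β * u ^ 2 ≤ β * v ^ 2 := by
      have : u ^ 2 ≤ v ^ 2 := by nlinarith [hu.out]
      exact mul_le_mul_of_nonneg_left this hβ
    linarith
  have ψsm : StrictMonoOn ψ (Ici 0) := by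
    intro u hu v hv huv
    rcases (ψmono hu hv huv.le).lt_or_eq with h | h
    · exact h
    · exfalso
      have : u = v := by
        have h1 := hinv₂ u hu
        have h2 := hinv₂ v hv
        rw [← h1, ← h2, h]
      exact absurd this huv.ne
  have ψconv : ConvexOn ℝ (Ici 0) ψ := by
    refine ⟨convex_Ici 0, ?_⟩
    intro u hu v hv a b ha hb hab
    simp only [smul_eq_mul]
    have hc : (0:ℝ) ≤ a * u + b * v :=
      add_nonneg (mul_nonneg ha hu.out) (mul_nonneg hb hv.out)
    rw [hψ u hu, hψ v hv, hψ _ hc]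
    have hint : (∫ x, (Real.exp (-((a * u + b * v) * x)) - 1 + (a * u + b * v) * x) ∂ν) ≤
        a * ∫ x, (Real.exp (-(u * x)) - 1 + u * x) ∂ν
        + b * ∫ x, (Real.exp (-(v * x)) - 1 + v * x) ∂ν := by
      rw [← integral_const_mul, ← integral_const_mul,
        ← integral_add ((hInt u hu).const_mul a) ((hInt v hv).const_mul b)]
      apply integral_mono (hInt _ hc) (((hInt u hu).const_mul a).add ((hInt v hv).const_mul b))
      intro x
      have hexp : Real.exp (-((a * u + b * v) * x)) ≤
          a * Real.exp (-(u * x)) + b * Real.exp (-(v * x)) := by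
        have := convexOn_exp.2 (mem_univ (-(u * x))) (mem_univ (-(v * x))) ha hb hab
        simp only [smul_eq_mul] at this
        convert this using 2; rfl; ring
      simp only [Pi.add_apply]
      have hb' : b = 1 - a := by linarith
      have hexpand : a * (Real.exp (-(u * x)) - 1 + u * x) + b * (Real.exp (-(v * x)) - 1 + v * x)
          = a * Real.exp (-(u * x)) + b * Real.exp (-(v * x)) - 1 + (a * u + b * v) * x := by
        rw [hb']; ring
      rw [hexpand]
      linarith
    have key : a * u ^ 2 + b * v ^ 2 - (a * u + b * v) ^ 2 = a * b * (u - v) ^ 2 := by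
      have hb' : b = 1 - a := by linarith
      rw [hb']; ring
    have key2 : 0 ≤ β * (a * b * (u - v) ^ 2) :=
      mul_nonneg hβ (mul_nonneg (mul_nonneg ha hb) (sq_nonneg _))
    nlinarith [key2]
  have ψchord : ∀ c : ℝ, 0 < c → ∀ u : ℝ, u ∈ Icc 0 c → ψ u ≤ ψ c / c * u := by
    intro c hc u hu
    have h := ψconv.2 (self_mem_Ici) (mem_Ici.2 hc.le)
      (show (0:ℝ) ≤ 1 - u / c by rw [sub_nonneg]; exact div_le_one_of_le₀ hu.2 hc.le)
      (show (0:ℝ) ≤ u / c from div_nonneg hu.1 hc.le)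
      (show (1 - u / c) + u / c = 1 by ring)
    simp only [smul_eq_mul, mul_zero, zero_add, ψ0] at h
    rw [div_mul_cancel₀ _ hc.ne'] at h
    calc ψ u ≤ u / c * ψ c := h
      _ = ψ c / c * u := by ring
  have ψ'mono : ∀ a b : ℝ, 0 < a → a ≤ b → ψ' a ≤ ψ' b := by
    intro a b ha hab
    rcases hab.lt_or_eq with h | h
    · have h1 := ψconv.le_slope_of_hasDerivAt (mem_Ici.2 ha.le)
        (mem_Ici.2 (ha.le.trans hab)) h (hderiv a ha)
      have h2 := ψconv.slope_le_of_hasDerivAt (mem_Ici.2 ha.le)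
        (mem_Ici.2 (ha.le.trans hab)) h (hderiv b (ha.trans_le hab))
      exact h1.trans h2
    · rw [h]
  have ψ'pos : ∀ a : ℝ, 0 < a → 0 < ψ' a := by
    intro a ha
    have h1 := ψconv.slope_le_of_hasDerivAt (mem_Ici.2 (by linarith : (0:ℝ) ≤ a / 2))
      (mem_Ici.2 ha.le) (by linarith) (hderiv a ha)
    have h2 : 0 < slope ψ (a / 2) a := by
      rw [slope_def_field]
      apply div_pos
      · rw [sub_pos]
        exact ψsm (mem_Ici.2 (by linarith)) (mem_Ici.2 ha.le) (by linarith)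
      · linarith
    exact h2.trans_le h1
  have ψcont : ContinuousOn ψ (Ici 0) := by
    intro u hu
    rcases hu.out.eq_or_lt with h | h
    · rw [← h]
      have h1 : Icc (0:ℝ) 1 ∈ nhdsWithin (0:ℝ) (Ici 0) := by
        rw [← Ici_inter_Iic]
        exact inter_mem_nhdsWithin _ (Iic_mem_nhds one_pos)
      have hb : ∀ᶠ x in nhdsWithin (0:ℝ) (Ici 0), ψ x ≤ ψ 1 / 1 * x := by
        filter_upwards [h1] with x hx using ψchord 1 one_pos x hx
      have hnn : ∀ᶠ x in nhdsWithin (0:ℝ) (Ici 0), 0 ≤ ψ x := by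
        filter_upwards [self_mem_nhdsWithin] with x hx using ψnn x hx
      have htend : Filter.Tendsto (fun x : ℝ => ψ 1 / 1 * x)
          (nhdsWithin (0:ℝ) (Ici 0)) (nhds 0) := by
        have h2 : Filter.Tendsto (fun x : ℝ => ψ 1 / 1 * x) (nhds 0) (nhds (ψ 1 / 1 * 0)) :=
          (continuous_const.mul continuous_id).tendsto 0
        rw [mul_zero] at h2
        exact h2.mono_left nhdsWithin_le_nhds
      have := squeeze_zero' hnn hb htend
      unfold ContinuousWithinAt
      rw [ψ0]
      exact this
    · exact ((hderiv u h).differentiableAt.continuousAt).continuousWithinAt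
  -- extension of ψ to an order isomorphism of ℝ
  set Ψ : ℝ → ℝ := fun u => ψ (max u 0) + min u 0 with hΨdef
  have hΨeq : ∀ u : ℝ, 0 ≤ u → Ψ u = ψ u := by
    intro u hu; simp [hΨdef, max_eq_left hu, min_eq_right hu]
  have hΨcont : Continuous Ψ := by
    apply Continuous.add
    · exact ψcont.comp_continuous (continuous_id.max continuous_const)
        (fun u => mem_Ici.2 (le_max_right _ _))
    · exact continuous_id.min continuous_const
  have hΨsm : StrictMono Ψ := by
    intro u v huv
    rcases le_or_gt 0 u with hu | hu
    · rw [hΨeq u hu, hΨeq v (hu.trans huv.le)]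
      exact ψsm (mem_Ici.2 hu) (mem_Ici.2 (hu.trans huv.le)) huv
    · rcases le_or_gt 0 v with hv | hv
      · have h1 : Ψ u = ψ 0 + u := by simp [hΨdef, max_eq_right hu.le, min_eq_left hu.le]
        have h2 : Ψ v = ψ v := hΨeq v hv
        rw [h1, h2, ψ0, zero_add]
        exact hu.trans_le (ψnn v hv)
      · have h1 : Ψ u = ψ 0 + u := by simp [hΨdef, max_eq_right hu.le, min_eq_left hu.le]
        have h2 : Ψ v = ψ 0 + v := by simp [hΨdef, max_eq_right hv.le, min_eq_left hv.le]
        rw [h1, h2]; linarith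
  have hΨsurj : Function.Surjective Ψ := by
    intro w
    rcases le_or_gt 0 w with hw | hw
    · refine ⟨ψinv w, ?_⟩
      have hnn : 0 ≤ ψinv w := by
        rcases hw.eq_or_lt with h | h
        · rw [← h]
          have := hinv₂ 0 le_rfl
          rw [ψ0] at this; rw [this]
        · exact (hinvpos w h).le
      rw [hΨeq _ hnn, hinv₁ w hw]
    · exact ⟨w, by simp [hΨdef, max_eq_right hw.le, min_eq_left hw.le, ψ0]⟩
  have ψinv0 : ψinv 0 = 0 := by
    have := hinv₂ 0 le_rfl
    rwa [ψ0] at this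
  have ψinvnn : ∀ x : ℝ, 0 ≤ x → 0 ≤ ψinv x := by
    intro x hx
    rcases hx.eq_or_lt with h | h
    · rw [← h, ψinv0]
    · exact (hinvpos x h).le
  have ψinvcont : ContinuousOn ψinv (Ici 0) := by
    set e : ℝ ≃o ℝ := StrictMono.orderIsoOfSurjective Ψ hΨsm hΨsurj with hedef
    have hesymm : ∀ x : ℝ, 0 ≤ x → e.symm x = ψinv x := by
      intro x hx
      apply e.injective
      rw [e.apply_symm_apply]
      have : e (ψinv x) = Ψ (ψinv x) := rfl
      rw [this, hΨeq _ (ψinvnn x hx), hinv₁ x hx]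
    exact (e.symm.continuous.continuousOn).congr fun x hx => (hesymm x hx.out).symm
  have ψinv_deriv : ∀ x : ℝ, 0 < x → HasDerivAt ψinv (1 / ψ' (ψinv x)) x := by
    intro x hx
    have hp : 0 < ψinv x := hinvpos x hx
    have hcont : ContinuousAt ψinv x := (ψinvcont x (mem_Ici.2 hx.le)).continuousAt
      (Ici_mem_nhds hx)
    have hfg : ∀ᶠ w in nhds x, ψ (ψinv w) = w := by
      filter_upwards [eventually_gt_nhds hx] with w hw using hinv₁ w hw.le
    have := HasDerivAt.of_local_left_inverse hcont (hderiv (ψinv x) hp)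
      (ne_of_gt (ψ'pos _ hp)) hfg
    simpa [one_div] using this
  intro r l hr hl hlog
  have hκl := hκ l hl
  have κ0 : κ 0 l = 0 := hκ0 l hl
  set M : ℝ := ψinv l with hMdef
  have hM : 0 < M := hinvpos l hl
  have hψM : ψ M = l := hinv₁ l hl.le
  have κcont : ∀ s : ℝ, 0 ≤ s → ContinuousAt (fun t => κ t l) s :=
    fun s hs => (hκl s hs).continuousAt
  have κcontOn : ∀ c : ℝ, ContinuousOn (fun t => κ t l) (Icc 0 c) :=
    fun c s hs => (κcont s hs.1).continuousWithinAt
  -- κ is nonnegative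
  have κnonneg : ∀ s : ℝ, 0 ≤ s → 0 ≤ κ s l := by
    by_contra hcon
    push_neg at hcon
    obtain ⟨s₁, hs₁, hneg⟩ := hcon
    have hs₁0 : 0 < s₁ := by
      rcases hs₁.eq_or_lt with h | h
      · exfalso; rw [← h, κ0] at hneg; exact absurd hneg (lt_irrefl 0)
      · exact h
    set A := Icc 0 s₁ ∩ (fun s => κ s l) ⁻¹' (Ici 0) with hAdef
    have hA0 : (0:ℝ) ∈ A := ⟨⟨le_rfl, hs₁0.le⟩, by simp [κ0]⟩
    have hAclosed : IsClosed A :=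
      (κcontOn s₁).preimage_isClosed_of_isClosed isClosed_Icc isClosed_Ici
    have hAcomp : IsCompact A :=
      isCompact_Icc.of_isClosed_subset hAclosed inter_subset_left
    set s₀ := sSup A with hs₀def
    have hs₀A : s₀ ∈ A := hAcomp.sSup_mem ⟨0, hA0⟩
    obtain ⟨⟨hs₀0, hs₀1⟩, hκs₀⟩ := hs₀A
    have hlt : ∀ s : ℝ, s₀ < s → s ≤ s₁ → κ s l < 0 := by
      intro s h1 h2
      by_contra hge
      push_neg at hge
      have hmem : s ∈ A := ⟨⟨hs₀0.trans h1.le, h2⟩, hge⟩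
      exact absurd (le_csSup hAcomp.bddAbove hmem) (not_le.2 h1)
    have hs₀lt : s₀ < s₁ := by
      rcases hs₀1.eq_or_lt with h | h
      · exfalso; rw [h] at hκs₀; exact absurd (mem_Ici.1 hκs₀) (not_le.2 hneg)
      · exact h
    have hκs₀' : κ s₀ l = 0 := by
      refine le_antisymm ?_ hκs₀
      have htend : Filter.Tendsto (fun t => κ t l) (nhdsWithin s₀ (Ioi s₀)) (nhds (κ s₀ l)) :=
        ((κcont s₀ hs₀0).tendsto).mono_left nhdsWithin_le_nhds
      refine le_of_tendsto htend ?_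
      filter_upwards [Ioc_mem_nhdsGT hs₀lt] with s hs
        using (hlt s hs.1 hs.2).le
    have hd := hκl s₀ hs₀0
    rw [hκs₀', ψ0, sub_zero] at hd
    have hslope := hasDerivAt_iff_tendsto_slope.1 hd
    have hev : ∀ᶠ s in nhdsWithin s₀ {s₀}ᶜ, 0 < slope (fun t => κ t l) s₀ s :=
      hslope.eventually (eventually_gt_nhds hl)
    have hev' : ∀ᶠ s in nhdsWithin s₀ (Ioi s₀), 0 < slope (fun t => κ t l) s₀ s :=
      hev.filter_mono (nhdsWithin_mono s₀ fun x hx => (ne_of_gt hx))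
    obtain ⟨s, hsl, hsm⟩ := (hev'.and (eventually_mem_nhdsWithin.and
      (Filter.eventually_of_mem (Ioc_mem_nhdsGT hs₀lt) fun x hx => hx))).exists
    obtain ⟨hsIoi, hsIoc⟩ := hsm
    have hden : 0 < s - s₀ := sub_pos.2 hsIoi
    rw [slope_def_field, div_pos_iff] at hsl
    rcases hsl with ⟨hnum, _⟩ | ⟨_, hden'⟩
    · rw [hκs₀', sub_zero] at hnum
      exact absurd hnum (not_lt.2 (hlt s hsIoi hsIoc.2).le)
    · linarith
  -- κ is positive for positive times
  have κpos : ∀ s : ℝ, 0 < s → 0 < κ s l := by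
    intro s₁ hs₁
    rcases (κnonneg s₁ hs₁.le).eq_or_lt with h | h
    · exfalso
      have hd := hκl s₁ hs₁.le
      rw [← h, ψ0, sub_zero] at hd
      have hslope := hasDerivAt_iff_tendsto_slope.1 hd
      have hev : ∀ᶠ s in nhdsWithin s₁ {s₁}ᶜ, 0 < slope (fun t => κ t l) s₁ s :=
        hslope.eventually (eventually_gt_nhds hl)
      have hev' : ∀ᶠ s in nhdsWithin s₁ (Iio s₁), 0 < slope (fun t => κ t l) s₁ s :=
        hev.filter_mono (nhdsWithin_mono s₁ fun x hx => (ne_of_lt hx))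
      obtain ⟨s, hsl, hsm⟩ := (hev'.and (Filter.eventually_of_mem
        (Ioo_mem_nhdsLT hs₁) fun x hx => hx)).exists
      rw [slope_def_field, div_pos_iff] at hsl
      rcases hsl with ⟨_, hden⟩ | ⟨hnum, _⟩
      · linarith [hsm.2]
      · rw [← h, sub_zero] at hnum
        exact absurd hnum (not_lt.2 (κnonneg s hsm.1.le))
    · exact h
  -- κ stays at or below the equilibrium M
  have κleM : ∀ s : ℝ, 0 ≤ s → κ s l ≤ M := by
    by_contra hcon
    push_neg at hcon
    obtain ⟨s₁, hs₁, hgt⟩ := hcon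
    have hs₁0 : 0 < s₁ := by
      rcases hs₁.eq_or_lt with h | h
      · exfalso; rw [← h, κ0] at hgt; exact absurd hgt (not_lt.2 hM.le)
      · exact h
    set A := Icc 0 s₁ ∩ (fun s => κ s l) ⁻¹' (Iic M) with hAdef
    have hA0 : (0:ℝ) ∈ A := ⟨⟨le_rfl, hs₁0.le⟩, by simp [κ0, hM.le]⟩
    have hAclosed : IsClosed A :=
      (κcontOn s₁).preimage_isClosed_of_isClosed isClosed_Icc isClosed_Iic
    have hAcomp : IsCompact A :=
      isCompact_Icc.of_isClosed_subset hAclosed inter_subset_left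
    set s₀ := sSup A with hs₀def
    have hs₀A : s₀ ∈ A := hAcomp.sSup_mem ⟨0, hA0⟩
    obtain ⟨⟨hs₀0, hs₀1⟩, hκs₀⟩ := hs₀A
    have hgt' : ∀ s : ℝ, s₀ < s → s ≤ s₁ → M < κ s l := by
      intro s h1 h2
      by_contra hge
      push_neg at hge
      have hmem : s ∈ A := ⟨⟨hs₀0.trans h1.le, h2⟩, hge⟩
      exact absurd (le_csSup hAcomp.bddAbove hmem) (not_le.2 h1)
    have hs₀lt : s₀ < s₁ := by
      rcases hs₀1.eq_or_lt with h | h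
      · exfalso; rw [h] at hκs₀; exact absurd (mem_Iic.1 hκs₀) (not_le.2 hgt)
      · exact h
    have hanti : AntitoneOn (fun t => κ t l) (Icc s₀ s₁) := by
      apply antitoneOn_of_deriv_nonpos (convex_Icc s₀ s₁)
      · exact fun s hs => (κcont s (hs₀0.trans hs.1)).continuousWithinAt
      · intro s hs
        rw [interior_Icc] at hs
        exact (hκl s (hs₀0.trans hs.1.le)).differentiableAt.differentiableWithinAt
      · intro s hs
        rw [interior_Icc] at hs
        rw [(hκl s (hs₀0.trans hs.1.le)).deriv]
        have h1 : M < κ s l := hgt' s hs.1 hs.2.le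
        have h2 : ψ M < ψ (κ s l) :=
          ψsm (mem_Ici.2 hM.le) (mem_Ici.2 (hM.le.trans h1.le)) h1
        rw [hψM] at h2
        linarith
    have := hanti (left_mem_Icc.2 hs₀lt.le) (right_mem_Icc.2 hs₀lt.le) hs₀lt.le
    simp only at this
    exact absurd (this.trans hκs₀) (not_le.2 hgt)
  -- κ stays strictly below M (Gronwall-type argument)
  have κltM : ∀ s : ℝ, 0 ≤ s → κ s l < M := by
    intro s₁ hs₁
    rcases (κleM s₁ hs₁).lt_or_eq with h | h
    · exact h
    · exfalso
      have hs₁0 : 0 < s₁ := by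
        rcases hs₁.eq_or_lt with h' | h'
        · exfalso; rw [← h', κ0] at h; exact absurd h.symm (ne_of_gt hM)
        · exact h'
      set C : ℝ := ψ (M + 1) - ψ M with hCdef
      have hLip : ∀ u : ℝ, 0 ≤ u → u ≤ M → ψ M - ψ u ≤ C * (M - u) := by
        intro u hu huM
        rcases huM.lt_or_eq with h' | h'
        · have hslope := ψconv.slope_mono_adjacent (mem_Ici.2 hu)
            (mem_Ici.2 (by linarith : (0:ℝ) ≤ M + 1)) h' (by linarith : M < M + 1)
          rw [div_le_iff₀ (by linarith : (0:ℝ) < M - u)] at hslope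
          calc ψ M - ψ u ≤ (ψ (M + 1) - ψ M) / (M + 1 - M) * (M - u) := hslope
            _ = C * (M - u) := by rw [hCdef]; norm_num
        · rw [h']; simp
      set g : ℝ → ℝ := fun s => Real.exp (C * s) * (M - κ s l) with hgdef
      have hgmono : MonotoneOn g (Icc 0 s₁) := by
        have hgd : ∀ s : ℝ, 0 ≤ s → HasDerivAt g
            (Real.exp (C * s) * (C * (M - κ s l) - (l - ψ (κ s l)))) s := by
          intro s hs
          have h1 : HasDerivAt (fun s : ℝ => Real.exp (C * s)) (Real.exp (C * s) * C) s := by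
            simpa using ((hasDerivAt_id s).const_mul C).exp
          have h2 : HasDerivAt (fun s => M - κ s l) (-(l - ψ (κ s l))) s :=
            (hκl s hs).const_sub M
          have := h1.mul h2
          exact this.congr_deriv (by ring)
        apply monotoneOn_of_deriv_nonneg (convex_Icc 0 s₁)
        · exact fun s hs => ((hgd s hs.1).continuousAt).continuousWithinAt
        · intro s hs
          rw [interior_Icc] at hs
          exact (hgd s hs.1.le).differentiableAt.differentiableWithinAt
        · intro s hs
          rw [interior_Icc] at hs
          rw [(hgd s hs.1.le).deriv]
          apply mul_nonneg (Real.exp_nonneg _)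
          have h1 : ψ M - ψ (κ s l) ≤ C * (M - κ s l) :=
            hLip _ (κnonneg s hs.1.le) (κleM s hs.1.le)
          rw [hψM] at h1
          linarith
      have hg0 : g 0 = M := by simp [hgdef, κ0]
      have hgs₁ : g s₁ = 0 := by simp [hgdef, ← h]
      have := hgmono (left_mem_Icc.2 hs₁) (right_mem_Icc.2 hs₁) hs₁
      rw [hg0, hgs₁] at this
      exact absurd this (not_le.2 hM)
  -- the function y(s) = -log(1 - ψ(κ(s))/l)
  set y : ℝ → ℝ := fun s => -Real.log (1 - ψ (κ s l) / l) with hydef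
  have hLpos : ∀ s : ℝ, 0 ≤ s → 0 < 1 - ψ (κ s l) / l := by
    intro s hs
    have h1 : ψ (κ s l) < l := by
      have := ψsm (mem_Ici.2 (κnonneg s hs)) (mem_Ici.2 hM.le) (κltM s hs)
      rwa [hψM] at this
    rw [sub_pos, div_lt_one hl]
    exact h1
  have hψκnn : ∀ s : ℝ, 0 ≤ s → 0 ≤ ψ (κ s l) := fun s hs => ψnn _ (κnonneg s hs)
  have y0 : y 0 = 0 := by simp [hydef, κ0, ψ0]
  have hz_deriv : ∀ s : ℝ, 0 < s →
      HasDerivAt (fun t => ψ (κ t l)) (ψ' (κ s l) * (l - ψ (κ s l))) s :=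
    fun s hs => (hderiv _ (κpos s hs)).comp s (hκl s hs.le)
  have hy_deriv : ∀ s : ℝ, 0 < s → HasDerivAt y (ψ' (κ s l)) s := by
    intro s hs
    have hin : HasDerivAt (fun t => 1 - ψ (κ t l) / l)
        (-(ψ' (κ s l) * (l - ψ (κ s l)) / l)) s :=
      ((hz_deriv s hs).div_const l).const_sub 1
    have hlog' := (hin.log (ne_of_gt (hLpos s hs.le))).neg
    refine hlog'.congr_deriv ?_
    have hne : l - ψ (κ s l) ≠ 0 := by
      have := hLpos s hs.le
      intro hcon
      rw [sub_pos, div_lt_one hl] at this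
      linarith [sub_eq_zero.1 hcon]
    field_simp
  have zcont : ContinuousOn (fun s => ψ (κ s l)) (Icc 0 r) := by
    intro s hs
    rcases hs.1.eq_or_lt with h | h
    · rw [← h]
      show Filter.Tendsto (fun t => ψ (κ t l)) (nhdsWithin 0 (Icc 0 r)) (nhds (ψ (κ 0 l)))
      rw [κ0, ψ0]
      apply squeeze_zero'
      · filter_upwards [self_mem_nhdsWithin] with t ht using hψκnn t ht.1
      · filter_upwards [self_mem_nhdsWithin] with t ht
          using ψchord M hM _ ⟨κnonneg t ht.1, κleM t ht.1⟩
      · have hκt : Filter.Tendsto (fun t => κ t l) (nhdsWithin 0 (Icc 0 r)) (nhds (κ 0 l)) :=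
          ((κcont 0 le_rfl).tendsto).mono_left nhdsWithin_le_nhds
        have := Filter.Tendsto.mul (tendsto_const_nhds (x := ψ M / M)) hκt
        rw [κ0, mul_zero] at this
        exact this
    · exact ((hz_deriv s h).continuousAt).continuousWithinAt
  have ycont : ContinuousOn y (Icc 0 r) :=
    ((continuousOn_const.sub (zcont.div_const l)).log
      (fun s hs => ne_of_gt (hLpos s hs.1))).neg
  have ymono : MonotoneOn y (Icc 0 r) := by
    apply monotoneOn_of_deriv_nonneg (convex_Icc 0 r) ycont
    · intro s hs
      rw [interior_Icc] at hs
      exact (hy_deriv s hs.1).differentiableAt.differentiableWithinAt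
    · intro s hs
      rw [interior_Icc] at hs
      rw [(hy_deriv s hs.1).deriv]
      exact (ψ'pos _ (κpos s hs.1)).le
  have ynn : ∀ s : ℝ, s ∈ Icc 0 r → 0 ≤ y s := by
    intro s hs
    have := ymono (left_mem_Icc.2 hr.le) hs hs.1
    rwa [y0] at this
  have yler : y r ≤ 1 := hlog
  have yub : ∀ s : ℝ, s ∈ Icc 0 r → y s ≤ 1 :=
    fun s hs => (ymono hs (right_mem_Icc.2 hr.le) hs.2).trans yler
  have hexp_y : ∀ s : ℝ, 0 ≤ s → Real.exp (-(y s)) = 1 - ψ (κ s l) / l := by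
    intro s hs
    rw [hydef]
    simp only [neg_neg]
    exact Real.exp_log (hLpos s hs)
  have ypos : ∀ s : ℝ, 0 < s → 0 < y s := by
    intro s hs
    have h2 : 0 < ψ (κ s l) := by
      have := ψsm self_mem_Ici (mem_Ici.2 (κnonneg _ hs.le)) (κpos s hs)
      rwa [ψ0] at this
    have h1 : 1 - ψ (κ s l) / l < 1 := by
      have : 0 < ψ (κ s l) / l := div_pos h2 hl
      linarith
    have := Real.log_neg (hLpos s hs.le) h1
    rw [hydef]
    simp only
    linarith
  -- the comparison function N
  set N : ℝ → ℝ := fun s => 2 / l * ψinv (l * y s / 2) - s with hNdef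
  have Nmono : MonotoneOn N (Icc 0 r) := by
    apply monotoneOn_of_deriv_nonneg (convex_Icc 0 r)
    · have hargcont : ContinuousOn (fun s => l * y s / 2) (Icc 0 r) :=
        (continuousOn_const.mul ycont).div_const 2
      have hmapsto : MapsTo (fun s => l * y s / 2) (Icc 0 r) (Ici 0) :=
        fun s hs => mem_Ici.2 (div_nonneg (mul_nonneg hl.le (ynn s hs)) two_pos.le)
      exact (continuousOn_const.mul (ψinvcont.comp hargcont hmapsto)).sub continuousOn_id
    · intro s hs
      rw [interior_Icc] at hs
      have hx : 0 < l * y s / 2 := by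
        have := ypos s hs.1
        positivity
      have hinner : HasDerivAt (fun t => l * y t / 2) (l * ψ' (κ s l) / 2) s :=
        ((hy_deriv s hs.1).const_mul l).div_const 2
      have hcomp := (ψinv_deriv _ hx).comp s hinner
      exact (((hcomp.const_mul (2 / l)).sub (hasDerivAt_id s)).differentiableAt).differentiableWithinAt
    · intro s hs
      rw [interior_Icc] at hs
      have hx : 0 < l * y s / 2 := by
        have := ypos s hs.1
        positivity
      set p : ℝ := ψinv (l * y s / 2) with hpdef
      have hp : 0 < p := hinvpos _ hx
      have hψp : ψ p = l * y s / 2 := hinv₁ _ hx.le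
      have hinner : HasDerivAt (fun t => l * y t / 2) (l * ψ' (κ s l) / 2) s :=
        ((hy_deriv s hs.1).const_mul l).div_const 2
      have hcomp := (ψinv_deriv _ hx).comp s hinner
      have hNd : HasDerivAt N (2 / l * (1 / ψ' p * (l * ψ' (κ s l) / 2)) - 1) s :=
        (hcomp.const_mul (2 / l)).sub (hasDerivAt_id s)
      rw [hNd.deriv]
      have hsIcc : s ∈ Icc 0 r := ⟨hs.1.le, hs.2.le⟩
      have hhalf := half_le_one_sub_exp (y s) (ynn s hsIcc) (yub s hsIcc)
      have hk : ψ (κ s l) = l * (1 - Real.exp (-(y s))) := by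
        rw [hexp_y s hs.1.le]
        field_simp
        ring
      have hψineq : ψ p ≤ ψ (κ s l) := by
        rw [hψp, hk]
        calc l * y s / 2 = l * (y s / 2) := by ring
          _ ≤ l * (1 - Real.exp (-(y s))) := mul_le_mul_of_nonneg_left hhalf hl.le
      have hple : p ≤ κ s l :=
        (ψsm.le_iff_le (mem_Ici.2 hp.le) (mem_Ici.2 (κnonneg s hs.1.le))).1 hψineq
      have hψ'le : ψ' p ≤ ψ' (κ s l) := ψ'mono p (κ s l) hp hple
      have hψ'p : 0 < ψ' p := ψ'pos p hp
      have hval : 2 / l * (1 / ψ' p * (l * ψ' (κ s l) / 2)) = ψ' (κ s l) / ψ' p := by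
        field_simp
      rw [hval]
      have : (1:ℝ) ≤ ψ' (κ s l) / ψ' p := (one_le_div hψ'p).2 hψ'le
      linarith
  have hN0 : N 0 = 0 := by
    rw [hNdef]
    simp only [y0, mul_zero, zero_div, ψinv0, mul_zero, sub_zero]
  have hNr := Nmono (left_mem_Icc.2 hr.le) (right_mem_Icc.2 hr.le) hr.le
  rw [hN0] at hNr
  have hfin : r ≤ 2 / l * ψinv (l * y r / 2) := by
    have h' : 0 ≤ 2 / l * ψinv (l * y r / 2) - r := hNr
    linarith
  have hargnn : 0 ≤ l * y r / 2 :=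
    div_nonneg (mul_nonneg hl.le (ynn r (right_mem_Icc.2 hr.le))) two_pos.le
  have harg : l * y r / 2 ≤ l / 2 := by
    have h1 : l * y r ≤ l * 1 := mul_le_mul_of_nonneg_left yler hl.le
    rw [mul_one] at h1
    exact (div_le_div_iff_of_pos_right (by norm_num : (0:ℝ) < 2)).2 h1
  have hinvle : ψinv (l * y r / 2) ≤ ψinv (l / 2) := by
    have h1 : ψ (ψinv (l * y r / 2)) ≤ ψ (ψinv (l / 2)) := by
      rw [hinv₁ _ hargnn, hinv₁ _ (by positivity : (0:ℝ) ≤ l / 2)]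
      exact harg
    exact (ψsm.le_iff_le (mem_Ici.2 (ψinvnn _ hargnn))
      (mem_Ici.2 (ψinvnn _ (by positivity)))).1 h1
  have hfin2 : r ≤ 2 / l * ψinv (l / 2) := by
    calc r ≤ 2 / l * ψinv (l * y r / 2) := hfin
      _ ≤ 2 / l * ψinv (l / 2) := mul_le_mul_of_nonneg_left hinvle (by positivity)
  have hrl : r * l / 2 ≤ ψinv (l / 2) := by
    have h2 := mul_le_mul_of_nonneg_right hfin2 (le_of_lt (half_pos hl))
    have h3 : (2 / l * ψinv (l / 2)) * (l / 2) = ψinv (l / 2) := by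
      field_simp
    rw [h3] at h2
    calc r * l / 2 = r * (l / 2) := by ring
      _ ≤ ψinv (l / 2) := h2
  have hfinal : ψ (r * l / 2) ≤ l / 2 := by
    have h1 := ψmono (mem_Ici.2 (by positivity : (0:ℝ) ≤ r * l / 2))
      (mem_Ici.2 (ψinvnn _ (by positivity : (0:ℝ) ≤ l / 2))) hrl
    rwa [hinv₁ _ (by positivity : (0:ℝ) ≤ l / 2)] at h1
  have h := mul_le_mul_of_nonneg_left hfinal (by positivity : (0:ℝ) ≤ 2 / l)
  have h2 : 2 / l * (l / 2) = 1 := by field_simp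
  rw [h2] at h
  exact h
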